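/- Let g be an overconvergent analytic function on ℤ_p with values in L: there exist b_n ∈ L and a real number ρ > 1 with ‖b_n‖·ρ^n → 0, such that g(x) = Σ_{n≥0} b_n x^n for all x ∈ ℤ_p. Then there exists a constant C such that for every integer h > C and every f ∈ C^{(h)}(ℤ_p, L), the product g·f again lies in C^{(h)}(ℤ_p, L); that is, the Mahler coefficients c_n = (Δ^n (g·f))(0) of g·f satisfy v(c_n) − r_h·n → +∞. -/

import Mathlib

open Filter fwdDiff

namespace Stmt6Aux

variable {p : ℕ} [Fact p.Prime] {L : Type*} [NontriviallyNormedField L]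
  [NormedAlgebra ℚ_[p] L] [IsUltrametricDist L]

/-- The natural map `ℤ_[p] → L`. -/
noncomputable def ι (x : ℤ_[p]) : L := algebraMap ℚ_[p] L (x : ℚ_[p])

lemma norm_ι_le_one (x : ℤ_[p]) : ‖(ι x : L)‖ ≤ 1 := by
  have h1 : ‖algebraMap ℚ_[p] L (x : ℚ_[p])‖ ≤ ‖(x : ℚ_[p])‖ := by
    rw [Algebra.algebraMap_eq_smul_one]
    exact (norm_smul_le _ _).trans (by rw [norm_one, mul_one])
  exact h1.trans x.2

lemma ι_add_one (x : ℤ_[p]) : (ι (x + 1) : L) = ι x + 1 := by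
  simp [ι, PadicInt.coe_add, PadicInt.coe_one, map_add, map_one]

lemma continuous_ι : Continuous (ι : ℤ_[p] → L) :=
  (continuous_algebraMap ℚ_[p] L).comp continuous_subtype_val

lemma cont_fwdDiff_iter {f : ℤ_[p] → L} (hf : Continuous f) (k : ℕ) :
    Continuous ((Δ_[(1 : ℤ_[p])])^[k] f) := by
  induction k with
  | zero => simpa using hf
  | succ k ih =>
    rw [Function.iterate_succ_apply']
    exact ((ih.comp (continuous_id.add continuous_const)).sub ih :)

lemma fwdDiff_iter_succ_eval (f : ℤ_[p] → L) (k : ℕ) (y : ℤ_[p]) :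
    (Δ_[(1 : ℤ_[p])])^[k] f (y + 1)
      = (Δ_[(1 : ℤ_[p])])^[k] f y + (Δ_[(1 : ℤ_[p])])^[k + 1] f y := by
  rw [Function.iterate_succ_apply']
  show _ = _ + ((Δ_[(1 : ℤ_[p])])^[k] f (y + 1) - (Δ_[(1 : ℤ_[p])])^[k] f y)
  abel

lemma lemA {f : ℤ_[p] → L} (hf : Continuous f) {j : ℕ} {B : ℝ}
    (hB : ∀ k, j ≤ k → ‖(Δ_[(1 : ℤ_[p])])^[k] f 0‖ ≤ B) :
    ∀ k, j ≤ k → ∀ y, ‖(Δ_[(1 : ℤ_[p])])^[k] f y‖ ≤ B := by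
  have hnat : ∀ n : ℕ, ∀ k, j ≤ k → ‖(Δ_[(1 : ℤ_[p])])^[k] f (n : ℤ_[p])‖ ≤ B := by
    intro n
    induction n with
    | zero => intro k hk; simpa using hB k hk
    | succ n ih =>
      intro k hk
      have hcast : ((n + 1 : ℕ) : ℤ_[p]) = (n : ℤ_[p]) + 1 := by push_cast; ring
      rw [hcast, fwdDiff_iter_succ_eval]
      exact (IsUltrametricDist.norm_add_le_max _ _).trans
        (max_le (ih k hk) (ih (k + 1) (hk.trans (Nat.le_succ k))))
  intro k hk y
  have hcl : IsClosed {y : ℤ_[p] | ‖(Δ_[(1 : ℤ_[p])])^[k] f y‖ ≤ B} :=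
    isClosed_le (cont_fwdDiff_iter hf k).norm continuous_const
  have hy : y ∈ closure (Set.range (Nat.cast : ℕ → ℤ_[p])) := PadicInt.denseRange_natCast y
  exact closure_minimal (by rintro _ ⟨n, rfl⟩; exact hnat n k hk) hcl hy

lemma fwdDiff_iter_shift (G : ℤ_[p] → L) (k : ℕ) (y : ℤ_[p]) :
    (Δ_[(1 : ℤ_[p])])^[k] (fun x => G (x + 1)) y = (Δ_[(1 : ℤ_[p])])^[k] G (y + 1) := by
  induction k generalizing G with
  | zero => rfl
  | succ k ih =>
    rw [Function.iterate_succ_apply, Function.iterate_succ_apply]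
    rw [show Δ_[(1 : ℤ_[p])] (fun x => G (x + 1)) = (fun x => Δ_[(1 : ℤ_[p])] G (x + 1)) from rfl]
    exact ih _

lemma lemM (G : ℤ_[p] → L) (k : ℕ) (y : ℤ_[p]) :
    (Δ_[(1 : ℤ_[p])])^[k + 1] (fun x => ι x * G x) y
      = ι y * (Δ_[(1 : ℤ_[p])])^[k + 1] G y + (k + 1) • (Δ_[(1 : ℤ_[p])])^[k] G (y + 1) := by
  induction k generalizing G y with
  | zero =>
    simp only [zero_add, Function.iterate_one, one_smul]
    show ι (y + 1) * G (y + 1) - ι y * G y = ι y * (G (y + 1) - G y) + G (y + 1)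
    rw [ι_add_one]
    ring
  | succ k ih =>
    have key : Δ_[(1 : ℤ_[p])] (fun x => (ι x : L) * G x)
        = (fun x => (ι x : L) * Δ_[(1 : ℤ_[p])] G x) + (fun x => G (x + 1)) := by
      funext x
      show ι (x + 1) * G (x + 1) - ι x * G x = ι x * (G (x + 1) - G x) + G (x + 1)
      rw [ι_add_one]; ring
    rw [Function.iterate_succ_apply, key, fwdDiff_iter_add, Pi.add_apply, ih (Δ_[(1 : ℤ_[p])] G) y,
      fwdDiff_iter_shift, ← Function.iterate_succ_apply, ← Function.iterate_succ_apply,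
      succ_nsmul _ (k + 1)]
    abel

lemma lemB : ∀ (m : ℕ) (G : ℤ_[p] → L) (B : ℝ) (k : ℕ),
    (∀ i z, k - m ≤ i → ‖(Δ_[(1 : ℤ_[p])])^[i] G z‖ ≤ B) →
    ∀ y, ‖(Δ_[(1 : ℤ_[p])])^[k] (fun x => (ι x : L) ^ m * G x) y‖ ≤ B := by
  intro m
  induction m with
  | zero =>
    intro G B k hG y
    have : (fun x : ℤ_[p] => (ι x : L) ^ 0 * G x) = G := by funext x; simp
    rw [this]
    exact hG k y (by omega)
  | succ m ih =>
    intro G B k hG y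
    have hfun : (fun x : ℤ_[p] => (ι x : L) ^ (m + 1) * G x)
        = (fun x => (ι x : L) * ((ι x : L) ^ m * G x)) := by funext x; ring
    rw [hfun]
    cases k with
    | zero =>
      simp only [Function.iterate_zero, id_eq]
      rw [norm_mul]
      exact (mul_le_of_le_one_left (norm_nonneg _) (norm_ι_le_one y)).trans
        (ih G B 0 (fun i z hi => hG i z (by omega)) y)
    | succ k =>
      rw [show (fun x => (ι x : L) * ((ι x : L) ^ m * G x))
          = (fun x => (ι x : L) * ((fun x' => (ι x' : L) ^ m * G x') x)) from rfl, lemM]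
      refine (IsUltrametricDist.norm_add_le_max _ _).trans (max_le ?_ ?_)
      · rw [norm_mul]
        exact (mul_le_of_le_one_left (norm_nonneg _) (norm_ι_le_one y)).trans
          (ih G B (k + 1) (fun i z hi => hG i z (by omega)) y)
      · exact (IsUltrametricDist.norm_nsmul_le _ _).trans
          (ih G B k (fun i z hi => hG i z (by omega)) (y + 1))

lemma lemSum (g : ℤ_[p] → L) (b : ℕ → L)
    (hg : ∀ x : ℤ_[p],
      HasSum (fun n : ℕ => b n * (algebraMap ℚ_[p] L (x : ℚ_[p])) ^ n) (g x))
    (f : ℤ_[p] → L) (n : ℕ) :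
    HasSum (fun m => b m * (Δ_[(1 : ℤ_[p])])^[n] (fun x => (ι x : L) ^ m * f x) 0)
      ((Δ_[(1 : ℤ_[p])])^[n] (fun x : ℤ_[p] => g x * f x) 0) := by
  have key : ∀ F : ℤ_[p] → L, (Δ_[(1 : ℤ_[p])])^[n] F 0
      = ∑ k ∈ Finset.range (n + 1), ((-1 : ℤ) ^ (n - k) * (n.choose k : ℤ)) • F ((k : ℤ_[p])) := by
    intro F
    rw [fwdDiff_iter_eq_sum_shift]
    refine Finset.sum_congr rfl fun k _ => by
      norm_cast
      rw [show ((0 : ℤ_[p]) + k • (1 : ℤ_[p])) = (k : ℤ_[p]) by simp [nsmul_eq_mul]]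
  simp only [key, Finset.mul_sum, mul_smul_comm, ← mul_assoc]
  exact hasSum_sum fun k _ => ((hg _).mul_right _).const_smul _

end Stmt6Aux

/-- Wu, Lemma `lemmahanalyticfunctions`: if `g` is an overconvergent analytic function on
`ℤ_p` with values in `L` (i.e. `g(x) = Σ b_n x^n` with `‖b_n‖·ρ^n → 0` for some `ρ > 1`),
then there is a constant `C` such that for every `h > C` and every
`f ∈ C^{(h)}(ℤ_p, L)` (continuous with Mahler coefficients `a_n = (Δ^n f)(0)` satisfying
`‖a_n‖·p^{r_h n} → 0`), the product `g·f` again lies in `C^{(h)}(ℤ_p, L)`, i.e. its Mahler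
coefficients `c_n = (Δ^n (g·f))(0)` satisfy `‖c_n‖·p^{r_h n} → 0`. -/
theorem stmt6 (p : ℕ) [Fact p.Prime] (L : Type*) [NontriviallyNormedField L]
    [NormedAlgebra ℚ_[p] L] [IsUltrametricDist L] [CompleteSpace L]
    (g : ℤ_[p] → L) (b : ℕ → L) (ρ : ℝ) (hρ : 1 < ρ)
    (hb : Tendsto (fun n : ℕ => ‖b n‖ * ρ ^ n) atTop (nhds 0))
    (hg : ∀ x : ℤ_[p],
      HasSum (fun n : ℕ => b n * (algebraMap ℚ_[p] L (x : ℚ_[p])) ^ n) (g x)) :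
    ∃ C : ℝ, ∀ h : ℕ, C < h →
      ∀ rh : ℝ, rh = 1 / ((p : ℝ) ^ (h - 1) * ((p : ℝ) - 1)) →
        ∀ f : C(ℤ_[p], L),
          Tendsto (fun n : ℕ =>
              ‖(Δ_[(1 : ℤ_[p])])^[n] (⇑f) 0‖ * (p : ℝ) ^ (rh * n)) atTop (nhds 0) →
          Tendsto (fun n : ℕ =>
              ‖(Δ_[(1 : ℤ_[p])])^[n] (fun x : ℤ_[p] => g x * f x) 0‖ * (p : ℝ) ^ (rh * n))
            atTop (nhds 0) := by
  have hp : p.Prime := Fact.out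
  have hp2 : 2 ≤ p := hp.two_le
  have hpR : (1 : ℝ) < p := by exact_mod_cast hp.one_lt
  have hp2R : (2 : ℝ) ≤ p := by exact_mod_cast hp2
  have hp0 : (0 : ℝ) < p := by linarith
  have hρ0 : (0 : ℝ) < ρ := by linarith
  have hlogρ : 0 < Real.log ρ := Real.log_pos hρ
  refine ⟨max 1 (Real.log p / Real.log ρ), ?_⟩
  intro h hC rh hrh f hf
  have hh1 : 1 ≤ h := by
    have h1R : (1 : ℝ) < h := lt_of_le_of_lt (le_max_left _ _) hC
    exact_mod_cast h1R.le
  have hhR : (0 : ℝ) < h := by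
    have : (1 : ℝ) ≤ h := by exact_mod_cast hh1
    linarith
  have hrh0 : 0 < rh := by
    rw [hrh]
    exact div_pos one_pos (mul_pos (pow_pos hp0 _) (by linarith))
  have hdenom : (h : ℝ) ≤ (p : ℝ) ^ (h - 1) * ((p : ℝ) - 1) := by
    have h2 : h ≤ 2 ^ (h - 1) := by
      have := Nat.lt_two_pow_self (n := h - 1); omega
    have h2R : (h : ℝ) ≤ (2 : ℝ) ^ (h - 1) := by exact_mod_cast h2
    have h3 : (2 : ℝ) ^ (h - 1) ≤ (p : ℝ) ^ (h - 1) :=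
      pow_le_pow_left₀ (by norm_num) (by exact_mod_cast hp2) _
    have h4 : (p : ℝ) ^ (h - 1) ≤ (p : ℝ) ^ (h - 1) * ((p : ℝ) - 1) :=
      le_mul_of_one_le_right (pow_pos hp0 _).le (by linarith)
    linarith
  have hrh_le : rh ≤ 1 / (h : ℝ) := by
    rw [hrh]
    exact one_div_le_one_div_of_le hhR hdenom
  have hlogp : 0 ≤ Real.log p := Real.log_nonneg hpR.le
  have hkey : rh * Real.log p ≤ Real.log ρ := by
    have h4 : Real.log p / Real.log ρ < h := lt_of_le_of_lt (le_max_right _ _) hC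
    have h5 : Real.log p < h * Real.log ρ := by rwa [div_lt_iff₀ hlogρ] at h4
    calc rh * Real.log p ≤ (1 / (h : ℝ)) * Real.log p :=
          mul_le_mul_of_nonneg_right hrh_le hlogp
      _ ≤ Real.log ρ := by
          rw [one_div_mul_eq_div, div_le_iff₀ hhR]
          nlinarith
  have hpfac : ∀ m : ℕ, (p : ℝ) ^ (rh * (m : ℝ)) ≤ ρ ^ m := by
    intro m
    have h6 : (p : ℝ) ^ rh ≤ ρ := by
      rw [Real.rpow_def_of_pos hp0]
      calc Real.exp (Real.log p * rh) ≤ Real.exp (Real.log ρ) :=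
            Real.exp_le_exp.mpr (by nlinarith)
        _ = ρ := Real.exp_log hρ0
    calc (p : ℝ) ^ (rh * (m : ℝ)) = ((p : ℝ) ^ rh) ^ m := by
          rw [Real.rpow_mul hp0.le, Real.rpow_natCast]
      _ ≤ ρ ^ m := pow_le_pow_left₀ (Real.rpow_nonneg hp0.le _) h6 m
  have hmono : ∀ s t : ℝ, s ≤ t → (p : ℝ) ^ s ≤ (p : ℝ) ^ t := fun s t hst =>
    (Real.rpow_le_rpow_left_iff hpR).mpr hst
  set u : ℕ → ℝ := fun k => ‖(Δ_[(1 : ℤ_[p])])^[k] (⇑f) 0‖ * (p : ℝ) ^ (rh * k) with hu_def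
  set w : ℕ → ℝ := fun m => ‖b m‖ * ρ ^ m with hw_def
  have hfu : Tendsto u atTop (nhds 0) := hf
  have hbw : Tendsto w atTop (nhds 0) := hb
  have hu0 : ∀ k, 0 ≤ u k := fun k =>
    mul_nonneg (norm_nonneg _) (Real.rpow_nonneg hp0.le _)
  have hw0 : ∀ m, 0 ≤ w m := fun m => mul_nonneg (norm_nonneg _) (by positivity)
  obtain ⟨U₀, hU₀⟩ := hfu.bddAbove_range
  obtain ⟨W₀, hW₀⟩ := hbw.bddAbove_range
  set U : ℝ := max U₀ 1 with hU_def
  set W : ℝ := max W₀ 1 with hW_def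
  have hUpos : (0 : ℝ) < U := lt_of_lt_of_le one_pos (le_max_right _ _)
  have hWpos : (0 : ℝ) < W := lt_of_lt_of_le one_pos (le_max_right _ _)
  have hU : ∀ k, u k ≤ U := fun k => le_trans (hU₀ ⟨k, rfl⟩) (le_max_left _ _)
  have hW : ∀ m, w m ≤ W := fun m => le_trans (hW₀ ⟨m, rfl⟩) (le_max_left _ _)
  have hanorm : ∀ k : ℕ, ‖(Δ_[(1 : ℤ_[p])])^[k] (⇑f) 0‖
      = u k * ((p : ℝ) ^ (rh * (k : ℝ)))⁻¹ := by
    intro k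
    rw [hu_def]
    rw [mul_assoc, mul_inv_cancel₀ (Real.rpow_pos_of_pos hp0 _).ne', mul_one]
  rw [Metric.tendsto_atTop]
  intro ε hε
  set ε' : ℝ := ε / 2 with hε'_def
  have hε'0 : 0 < ε' := by positivity
  obtain ⟨M, hM⟩ := Metric.tendsto_atTop.mp hbw (ε' / U) (by positivity)
  obtain ⟨N₁, hN₁⟩ := Metric.tendsto_atTop.mp hfu (ε' / W) (by positivity)
  have hM' : ∀ m, M ≤ m → w m ≤ ε' / U := fun m hm => by
    have := hM m hm
    rw [Real.dist_eq, sub_zero, abs_of_nonneg (hw0 m)] at this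
    exact this.le
  have hN₁' : ∀ k, N₁ ≤ k → u k ≤ ε' / W := fun k hk => by
    have := hN₁ k hk
    rw [Real.dist_eq, sub_zero, abs_of_nonneg (hu0 k)] at this
    exact this.le
  refine ⟨N₁ + M, fun n hn => ?_⟩
  rw [Real.dist_eq, sub_zero, abs_of_nonneg
    (mul_nonneg (norm_nonneg _) (Real.rpow_nonneg hp0.le _))]
  have hP : (0 : ℝ) < (p : ℝ) ^ (rh * (n : ℝ)) := Real.rpow_pos_of_pos hp0 _
  have main : ‖(Δ_[(1 : ℤ_[p])])^[n] (fun x : ℤ_[p] => g x * f x) 0‖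
      ≤ ε' / (p : ℝ) ^ (rh * (n : ℝ)) := by
    rw [← (Stmt6Aux.lemSum g b hg (⇑f) n).tsum_eq]
    apply IsUltrametricDist.norm_tsum_le_of_forall_le_of_nonneg (by positivity)
    intro m
    rw [le_div_iff₀ hP, norm_mul]
    set Q : ℝ := (p : ℝ) ^ (rh * ((n - m : ℕ) : ℝ)) with hQ_def
    have hQ0 : (0 : ℝ) < Q := Real.rpow_pos_of_pos hp0 _
    have hPQ : (p : ℝ) ^ (rh * (n : ℝ)) * Q⁻¹ ≤ ρ ^ m := by
      have hsub : (n : ℝ) ≤ ((n - m : ℕ) : ℝ) + m := by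
        have : n ≤ (n - m) + m := by omega
        exact_mod_cast this
      have hexp : rh * (n : ℝ) - rh * ((n - m : ℕ) : ℝ) ≤ rh * (m : ℝ) := by nlinarith
      calc (p : ℝ) ^ (rh * (n : ℝ)) * Q⁻¹
          = (p : ℝ) ^ (rh * (n : ℝ) - rh * ((n - m : ℕ) : ℝ)) := by
            rw [Real.rpow_sub hp0, div_eq_mul_inv]
        _ ≤ (p : ℝ) ^ (rh * (m : ℝ)) := hmono _ _ hexp
        _ ≤ ρ ^ m := hpfac m
    suffices H : ∃ V : ℝ, 0 ≤ V ∧ (∀ i, n - m ≤ i → u i ≤ V) ∧ ‖b m‖ * ρ ^ m * V ≤ ε' by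
      obtain ⟨V, hV0, hVi, hVb⟩ := H
      have hD : ‖(Δ_[(1 : ℤ_[p])])^[n] (fun x => (Stmt6Aux.ι x : L) ^ m * f x) 0‖
          ≤ V * Q⁻¹ := by
        apply Stmt6Aux.lemB m (⇑f) (V * Q⁻¹) n ?_ 0
        intro i z hi
        refine Stmt6Aux.lemA f.continuous (j := n - m) ?_ i hi z
        intro k hk
        rw [hanorm k]
        have h7 : Q ≤ (p : ℝ) ^ (rh * (k : ℝ)) :=
          hmono _ _ (mul_le_mul_of_nonneg_left (by exact_mod_cast hk) hrh0.le)
        have h8 : ((p : ℝ) ^ (rh * (k : ℝ)))⁻¹ ≤ Q⁻¹ := inv_anti₀ hQ0 h7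
        exact mul_le_mul (hVi k hk) h8 (by positivity) hV0
      calc ‖b m‖ * ‖(Δ_[(1 : ℤ_[p])])^[n] (fun x => (Stmt6Aux.ι x : L) ^ m * f x) 0‖
            * (p : ℝ) ^ (rh * (n : ℝ))
          ≤ ‖b m‖ * (V * Q⁻¹) * (p : ℝ) ^ (rh * (n : ℝ)) :=
            mul_le_mul_of_nonneg_right
              (mul_le_mul_of_nonneg_left hD (norm_nonneg _)) hP.le
        _ = ‖b m‖ * V * ((p : ℝ) ^ (rh * (n : ℝ)) * Q⁻¹) := by ring
        _ ≤ ‖b m‖ * V * ρ ^ m :=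
            mul_le_mul_of_nonneg_left hPQ (mul_nonneg (norm_nonneg _) hV0)
        _ = ‖b m‖ * ρ ^ m * V := by ring
        _ ≤ ε' := hVb
    rcases le_or_gt (m + N₁) n with hcase | hcase
    · refine ⟨ε' / W, by positivity, fun i hi => hN₁' i (by omega), ?_⟩
      calc ‖b m‖ * ρ ^ m * (ε' / W) ≤ W * (ε' / W) :=
            mul_le_mul_of_nonneg_right (hW m) (by positivity)
        _ = ε' := by field_simp
    · refine ⟨U, hUpos.le, fun i hi => hU i, ?_⟩
      have hm : M ≤ m := by omega
      calc ‖b m‖ * ρ ^ m * U ≤ (ε' / U) * U :=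
            mul_le_mul_of_nonneg_right (hM' m hm) hUpos.le
        _ = ε' := by field_simp
  calc ‖(Δ_[(1 : ℤ_[p])])^[n] (fun x : ℤ_[p] => g x * f x) 0‖ * (p : ℝ) ^ (rh * (n : ℝ))
      ≤ (ε' / (p : ℝ) ^ (rh * (n : ℝ))) * (p : ℝ) ^ (rh * (n : ℝ)) :=
        mul_le_mul_of_nonneg_right main hP.le
    _ = ε' := div_mul_cancel₀ _ hP.ne'
    _ < ε := by rw [hε'_def]; linarith
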